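/- Let A be a commutative ring with a multiplicative seminorm |·|_x bounded by 1, and let p = {a : |a|_x = 0} and q = {a : |a|_x < 1} (so p ⊆ q are a prime ideal and an ideal respectively). For t ∈ [0,∞], define L(t) : A → ℝ by L(0) = the trivial seminorm with kernel p (L(0)(a) = 0 if a ∈ p, 1 otherwise), L(t)(a) = |a|_x^t for t ∈ (0,∞), and L(∞) = the trivial seminorm with kernel q. Then each L(t) is a multiplicative seminorm on A, and the map t ↦ L(t) is continuous in the topology of pointwise convergence on A, i.e. for each a ∈ A the function t ↦ L(t)(a) is continuous on [0,∞]. -/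

import Mathlib

open scoped ENNReal Classical

def IsMultSeminorm {A : Type*} [CommRing A] (f : A → ℝ) : Prop :=
  f 0 = 0 ∧ f 1 = 1 ∧ (∀ x y, f (x * y) = f x * f y) ∧
    (∀ x y, f (x + y) ≤ f x + f y) ∧ ∀ x, 0 ≤ f x

/-- for a multiplicative seminorm `|·|_x ≤ 1` on `A`, the family
`L(0) = ` trivial seminorm with kernel `{|·|_x = 0}`, `L(t) = |·|_x^t` for `t ∈ (0,∞)`,
`L(∞) = ` trivial seminorm with kernel `{|·|_x < 1}`, consists of multiplicative
seminorms, and for each `a ∈ A` the map `t ↦ L(t)(a)` is continuous on `[0,∞]`. -/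
theorem stmt_5 {A : Type*} [CommRing A] (fx : A → ℝ)
    (hx : IsMultSeminorm fx) (hb : ∀ a, fx a ≤ 1)
    (L : ℝ≥0∞ → A → ℝ)
    (hL : ∀ t a, L t a =
      if t = 0 then (if fx a = 0 then 0 else 1)
      else if t = ⊤ then (if fx a < 1 then 0 else 1)
      else fx a ^ t.toReal) :
    (∀ t, IsMultSeminorm (L t)) ∧ ∀ a, Continuous fun t => L t a := by
  obtain ⟨h0, h1, hmul, hadd, hpos⟩ := hx
  have hpow : ∀ (a : A) (n : ℕ), fx (a ^ n) = fx a ^ n := by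
    intro a n
    induction n with
    | zero => simpa using h1
    | succ n ih => rw [pow_succ, hmul, ih, pow_succ]
  have hsum : ∀ (n : ℕ) (g : ℕ → A),
      fx (∑ i ∈ Finset.range n, g i) ≤ ∑ i ∈ Finset.range n, fx (g i) :=
    fun n g => Finset.le_sum_of_subadditive fx h0.le hadd _ g
  -- key: the seminorm is non-archimedean
  have nonarch : ∀ x y, fx (x + y) ≤ max (fx x) (fx y) := by
    intro x y
    set m := max (fx x) (fx y) with hm
    have hm0 : 0 ≤ m := le_trans (hpos x) (le_max_left _ _)
    have key : ∀ n : ℕ, fx (x + y) ^ n ≤ ((n : ℝ) + 1) * m ^ n := by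
      intro n
      rw [← hpow, add_pow]
      calc fx (∑ k ∈ Finset.range (n + 1), x ^ k * y ^ (n - k) * (n.choose k : A))
          ≤ ∑ k ∈ Finset.range (n + 1), fx (x ^ k * y ^ (n - k) * (n.choose k : A)) :=
            hsum _ _
        _ ≤ ∑ _k ∈ Finset.range (n + 1), m ^ n := by
            apply Finset.sum_le_sum
            intro k hk
            have hk' : k ≤ n := Nat.lt_succ_iff.mp (Finset.mem_range.mp hk)
            rw [hmul, hmul, hpow, hpow]
            have h2 : fx x ^ k * fx y ^ (n - k) * fx (n.choose k : A)
                ≤ fx x ^ k * fx y ^ (n - k) * 1 :=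
              mul_le_mul_of_nonneg_left (hb _)
                (mul_nonneg (pow_nonneg (hpos x) _) (pow_nonneg (hpos y) _))
            rw [mul_one] at h2
            refine h2.trans ?_
            calc fx x ^ k * fx y ^ (n - k)
                ≤ m ^ k * m ^ (n - k) :=
                  mul_le_mul (pow_le_pow_left₀ (hpos x) (le_max_left _ _) k)
                    (pow_le_pow_left₀ (hpos y) (le_max_right _ _) _)
                    (pow_nonneg (hpos y) _) (pow_nonneg hm0 _)
              _ = m ^ n := by rw [← pow_add]; congr 1; omega
        _ = ((n : ℝ) + 1) * m ^ n := by
            rw [Finset.sum_const, Finset.card_range, nsmul_eq_mul]; push_cast; ring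
    by_contra hcon
    push_neg at hcon
    set c := fx (x + y) with hcdef
    have hc0 : 0 < c := lt_of_le_of_lt hm0 hcon
    have hrlt : m / c < 1 := (div_lt_one hc0).mpr hcon
    have hr0 : 0 ≤ m / c := div_nonneg hm0 hc0.le
    have ht1 : Filter.Tendsto (fun n : ℕ => (n : ℝ) ^ 1 * (m / c) ^ n)
        Filter.atTop (nhds 0) :=
      (summable_pow_mul_geometric_of_norm_lt_one (R := ℝ) 1
        (by rwa [Real.norm_eq_abs, abs_of_nonneg hr0])).tendsto_atTop_zero
    have ht2 : Filter.Tendsto (fun n : ℕ => (m / c) ^ n) Filter.atTop (nhds 0) :=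
      tendsto_pow_atTop_nhds_zero_of_lt_one hr0 hrlt
    have htend : Filter.Tendsto (fun n : ℕ => ((n : ℝ) + 1) * (m / c) ^ n)
        Filter.atTop (nhds 0) := by
      have := ht1.add ht2
      simpa [add_mul, pow_one] using this
    have hone : ∀ n : ℕ, (1 : ℝ) ≤ ((n : ℝ) + 1) * (m / c) ^ n := by
      intro n
      have hkey := key n
      have hcn : 0 < c ^ n := pow_pos hc0 n
      rw [div_pow, mul_div_assoc']
      rw [le_div_iff₀ hcn, one_mul]
      exact hkey
    have : (1 : ℝ) ≤ 0 := ge_of_tendsto htend (Filter.Eventually.of_forall hone)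
    linarith
  -- multiplicativity of the special fiber condition at ⊤
  have hlt : ∀ x y, fx (x * y) < 1 ↔ fx x < 1 ∨ fx y < 1 := by
    intro x y
    constructor
    · intro h
      by_contra hcon
      push_neg at hcon
      obtain ⟨hx1, hy1⟩ := hcon
      rw [hmul, le_antisymm (hb x) hx1, le_antisymm (hb y) hy1, mul_one] at h
      exact lt_irrefl _ h
    · rintro (h | h)
      · rw [hmul]
        exact lt_of_le_of_lt (mul_le_of_le_one_right (hpos x) (hb y)) h
      · rw [hmul]
        exact lt_of_le_of_lt (mul_le_of_le_one_left (hpos y) (hb x)) h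
  constructor
  · intro t
    rcases eq_or_ne t 0 with rfl | ht0
    · refine ⟨by simp [hL, h0], by simp [hL, h1], ?_, ?_, ?_⟩
      · intro x y
        simp only [hL, if_pos rfl, hmul, mul_eq_zero]
        by_cases hx0 : fx x = 0 <;> by_cases hy0 : fx y = 0 <;> simp [hx0, hy0]
      · intro x y
        simp only [hL, if_pos rfl]
        by_cases hx0 : fx x = 0 <;> by_cases hy0 : fx y = 0
        · have : fx (x + y) = 0 :=
            le_antisymm (by simpa [hx0, hy0] using hadd x y) (hpos _)
          simp [this, hx0, hy0]
        all_goals simp only [hx0, hy0] ; split_ifs <;> first | tauto | norm_num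
      · intro x
        simp only [hL, if_pos rfl]
        split_ifs <;> norm_num
    rcases eq_or_ne t ⊤ with rfl | htop
    · refine ⟨by norm_num [hL, h0], by norm_num [hL, h1], ?_, ?_, ?_⟩
      · intro x y
        simp only [hL, if_neg (by simp : (⊤ : ℝ≥0∞) ≠ 0), if_pos rfl]
        by_cases hx1 : fx x < 1 <;> by_cases hy1 : fx y < 1 <;>
          simp [hlt, hx1, hy1]
      · intro x y
        simp only [hL, if_neg (by simp : (⊤ : ℝ≥0∞) ≠ 0), if_pos rfl]
        by_cases hx1 : fx x < 1 <;> by_cases hy1 : fx y < 1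
        · have : fx (x + y) < 1 := lt_of_le_of_lt (nonarch x y) (max_lt hx1 hy1)
          simp [this, hx1, hy1]
        all_goals simp only [hx1, hy1] ; split_ifs <;> first | tauto | norm_num
      · intro x
        simp only [hL, if_neg (by simp : (⊤ : ℝ≥0∞) ≠ 0), if_pos rfl]
        split_ifs <;> norm_num
    · have hr : 0 < t.toReal := ENNReal.toReal_pos ht0 htop
      refine ⟨?_, ?_, ?_, ?_, ?_⟩
      · simp [hL, ht0, htop, h0, Real.zero_rpow hr.ne']
      · simp [hL, ht0, htop, h1]
      · intro x y
        simp only [hL, if_neg ht0, if_neg htop]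
        rw [hmul, Real.mul_rpow (hpos x) (hpos y)]
      · intro x y
        simp only [hL, if_neg ht0, if_neg htop]
        calc fx (x + y) ^ t.toReal
            ≤ max (fx x) (fx y) ^ t.toReal :=
              Real.rpow_le_rpow (hpos _) (nonarch x y) hr.le
          _ ≤ fx x ^ t.toReal + fx y ^ t.toReal := by
              rcases le_total (fx x) (fx y) with h | h
              · rw [max_eq_right h]
                exact le_add_of_nonneg_left (Real.rpow_nonneg (hpos x) _)
              · rw [max_eq_left h]
                exact le_add_of_nonneg_right (Real.rpow_nonneg (hpos y) _)
      · intro x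
        simp only [hL, if_neg ht0, if_neg htop]
        exact Real.rpow_nonneg (hpos x) _
  · intro a
    rcases eq_or_lt_of_le (hpos a) with ha0 | ha0
    · -- fx a = 0 : the map is constantly 0
      have ha0' : fx a = 0 := ha0.symm
      have : (fun t => L t a) = fun _ => (0 : ℝ) := by
        funext t
        rw [hL, ha0']
        rcases eq_or_ne t 0 with rfl | ht0
        · norm_num
        rcases eq_or_ne t ⊤ with rfl | htop
        · norm_num
        · simp [ht0, htop, Real.zero_rpow (ENNReal.toReal_pos ht0 htop).ne']
      rw [this]; exact continuous_const
    rcases eq_or_lt_of_le (hb a) with ha1 | ha1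
    · -- fx a = 1 : the map is constantly 1
      have : (fun t => L t a) = fun _ => (1 : ℝ) := by
        funext t
        rw [hL, ha1]
        rcases eq_or_ne t 0 with rfl | ht0
        · norm_num
        rcases eq_or_ne t ⊤ with rfl | htop
        · norm_num
        · simp [ht0, htop]
      rw [this]; exact continuous_const
    · -- 0 < fx a < 1
      have hgeq : ∀ t : ℝ≥0∞, t ≠ ⊤ → L t a = fx a ^ t.toReal := by
        intro t ht
        rw [hL]
        rcases eq_or_ne t 0 with rfl | ht0
        · simp [ha0.ne']
        · simp [ht0, ht]
      rw [continuous_iff_continuousAt]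
      intro t
      rcases eq_or_ne t ⊤ with rfl | ht
      · -- continuity at ⊤
        have hLtop : L ⊤ a = 0 := by rw [hL]; simp [ha1]
        rw [ContinuousAt, hLtop, NormedAddCommGroup.tendsto_nhds_zero]
        intro ε hε
        obtain ⟨n, hn⟩ : ∃ n : ℕ, fx a ^ n < ε :=
          ((tendsto_pow_atTop_nhds_zero_of_lt_one ha0.le ha1).eventually
            (gt_mem_nhds hε)).exists
        have hmem : Set.Ioi ((n : ℝ≥0∞)) ∈ nhds (⊤ : ℝ≥0∞) :=
          Ioi_mem_nhds (ENNReal.natCast_lt_top n)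
        filter_upwards [hmem] with s hs
        rcases eq_or_ne s ⊤ with rfl | hs'
        · simpa [hLtop] using hε
        · rw [hgeq s hs', Real.norm_eq_abs,
            abs_of_nonneg (Real.rpow_nonneg (hpos a) _)]
          have hns : (n : ℝ) ≤ s.toReal := by
            have := (ENNReal.toReal_le_toReal (ENNReal.natCast_ne_top n) hs').mpr
              (le_of_lt hs)
            simpa using this
          calc fx a ^ s.toReal ≤ fx a ^ ((n : ℕ) : ℝ) :=
                Real.rpow_le_rpow_of_exponent_ge ha0 ha1.le hns
            _ = fx a ^ n := Real.rpow_natCast _ n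
            _ < ε := hn
      · -- continuity at finite points
        have hcont : ContinuousAt (fun s : ℝ≥0∞ => fx a ^ s.toReal) t :=
          (Real.continuousAt_const_rpow ha0.ne').comp (ENNReal.tendsto_toReal ht)
        apply hcont.congr
        filter_upwards [compl_singleton_mem_nhds ht] with s hs
        exact (hgeq s hs).symm
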